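/- Let i : Ξ → Ξ' be a split injection of finitely generated free ℤ-modules, and let f be an element of the completed symmetric algebra of Ξ ⊗ ℚ. If the image of f in the completed symmetric algebra of Ξ' ⊗ ℚ under the map induced by i is of class K_N, then f is of class K_N. -/

import Mathlib

/-- The map on completed symmetric algebras (multivariate power series) induced by a
`ℤ`-linear map `i : ℤ^r → ℤ^{r'}`: each variable `t_k` is substituted by the linear
form `∑_l (i e_k)_l t_l`.  Since the substituted forms are homogeneous of degree 1,
the coefficient of a monomial `d` in the image only involves coefficients of monomials
`m` of `F` with `|m| = |d|`, giving the finite sum below. -/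
noncomputable def inducedMap {r r' : ℕ} (i : (Fin r → ℤ) →ₗ[ℤ] (Fin r' → ℤ))
    (F : MvPowerSeries (Fin r) ℂ) : MvPowerSeries (Fin r') ℂ :=
  fun d =>
    ∑ m ∈ (Finset.Iic
        (Finsupp.equivFunOnFinite.symm fun _ : Fin r => d.sum fun _ e => e)).filter
        (fun m => (m.sum fun _ e => e) = d.sum fun _ e => e),
      MvPowerSeries.coeff m F *
        MvPolynomial.coeff d (∏ k : Fin r,
          (∑ l : Fin r', MvPolynomial.C ((i (Pi.single k 1) l : ℤ) : ℂ) *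
            MvPolynomial.X l) ^ m k)

open MvPolynomial

namespace KNaux

variable {r r' r'' : ℕ}

lemma sum_eq_degree (d : Fin r →₀ ℕ) : (d.sum fun _ e => e) = d.degree := rfl

noncomputable def L (a : (Fin r → ℤ) →ₗ[ℤ] (Fin r' → ℤ)) (k : Fin r) :
    MvPolynomial (Fin r') ℂ :=
  ∑ l : Fin r', MvPolynomial.C ((a (Pi.single k 1) l : ℤ) : ℂ) * MvPolynomial.X l

lemma L_isHomogeneous (a : (Fin r → ℤ) →ₗ[ℤ] (Fin r' → ℤ)) (k : Fin r) :
    (L a k).IsHomogeneous 1 := by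
  apply IsHomogeneous.sum
  intro l _
  exact isHomogeneous_C_mul_X _ _

noncomputable def Pm (a : (Fin r → ℤ) →ₗ[ℤ] (Fin r' → ℤ)) (m : Fin r →₀ ℕ) :
    MvPolynomial (Fin r') ℂ :=
  ∏ k : Fin r, (L a k) ^ m k

lemma Pm_isHomogeneous (a : (Fin r → ℤ) →ₗ[ℤ] (Fin r' → ℤ)) (m : Fin r →₀ ℕ) :
    (Pm a m).IsHomogeneous (m.degree) := by
  have : m.degree = ∑ k : Fin r, m k := by
    rw [Finsupp.degree]
    exact Finset.sum_subset (Finset.subset_univ _) (by simp +contextual)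
  rw [this]
  exact IsHomogeneous.prod _ _ _ (fun k _ => by simpa using (L_isHomogeneous a k).pow (m k))

lemma coeff_Pm_eq_zero (a : (Fin r → ℤ) →ₗ[ℤ] (Fin r' → ℤ)) {m : Fin r →₀ ℕ}
    {d : Fin r' →₀ ℕ} (h : d.degree ≠ m.degree) :
    MvPolynomial.coeff d (Pm a m) = 0 :=
  (Pm_isHomogeneous a m).coeff_eq_zero h

/-- the box of multi-indices with all entries `≤ n` -/
noncomputable def box (r n : ℕ) : Finset (Fin r →₀ ℕ) :=
  Finset.Iic (Finsupp.equivFunOnFinite.symm fun _ : Fin r => n)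

lemma mem_box {n : ℕ} {m : Fin r →₀ ℕ} : m ∈ box r n ↔ ∀ k, m k ≤ n := by
  simp only [box, Finset.mem_Iic, Finsupp.le_iff]
  constructor
  · intro h k
    by_cases hk : m k = 0
    · simp [hk]
    · simpa using h k (Finsupp.mem_support_iff.2 hk)
  · intro h k _
    simpa using h k

lemma mem_box_of_degree_le {n : ℕ} {m : Fin r →₀ ℕ} (h : m.degree ≤ n) :
    m ∈ box r n :=
  mem_box.2 fun k => le_trans (Finsupp.le_degree k m) h

noncomputable def Trunc (F : MvPowerSeries (Fin r) ℂ) (n : ℕ) :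
    MvPolynomial (Fin r) ℂ :=
  ∑ m ∈ box r n, monomial m (MvPowerSeries.coeff m F)

lemma coeff_Trunc (F : MvPowerSeries (Fin r) ℂ) (n : ℕ) (m : Fin r →₀ ℕ) :
    (Trunc F n).coeff m =
      if m ∈ box r n then MvPowerSeries.coeff m F else 0 := by
  rw [Trunc, MvPolynomial.coeff_sum]
  simp only [MvPolynomial.coeff_monomial]
  exact Finset.sum_ite_eq' (box r n) m _

lemma inducedMap_coeff (a : (Fin r → ℤ) →ₗ[ℤ] (Fin r' → ℤ)) (F : MvPowerSeries (Fin r) ℂ)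
    (d : Fin r' →₀ ℕ) :
    MvPowerSeries.coeff d (inducedMap a F) =
      ∑ m ∈ (box r d.degree).filter (fun m => m.degree = d.degree),
        MvPowerSeries.coeff m F * MvPolynomial.coeff d (Pm a m) := rfl

/-- Key: the coefficient of the induced map equals the coefficient of the
evaluation of a sufficiently large truncation. -/
lemma inducedMap_coeff_eq_trunc (a : (Fin r → ℤ) →ₗ[ℤ] (Fin r' → ℤ))
    (F : MvPowerSeries (Fin r) ℂ) (d : Fin r' →₀ ℕ) {n : ℕ} (hn : d.degree ≤ n) :
    MvPowerSeries.coeff d (inducedMap a F) =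
      MvPolynomial.coeff d (aeval (L a) (Trunc F n)) := by
  rw [inducedMap_coeff, Trunc, map_sum]
  have : ∀ m : Fin r →₀ ℕ,
      MvPolynomial.coeff d (aeval (L a) (monomial m (MvPowerSeries.coeff m F)))
        = MvPowerSeries.coeff m F * MvPolynomial.coeff d (Pm a m) := by
    intro m
    rw [aeval_monomial]
    rw [show (Finsupp.prod m fun k e => L a k ^ e) = Pm a m from
      Finsupp.prod_fintype _ _ (by simp)]
    rw [MvPolynomial.algebraMap_eq, MvPolynomial.coeff_C_mul]
  rw [MvPolynomial.coeff_sum]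
  simp_rw [this]
  have hsub : box r d.degree ⊆ box r n := fun m hm =>
    mem_box.2 fun k => le_trans (mem_box.1 hm k) hn
  rw [Finset.sum_filter]
  rw [Finset.sum_subset hsub (fun m hm hm' => by
    rw [if_neg]
    intro hdeg
    exact hm' (mem_box_of_degree_le (hdeg ▸ le_refl _)))]
  apply Finset.sum_congr rfl
  intro m hm
  split
  · rfl
  · next hdeg => rw [coeff_Pm_eq_zero a (fun h => hdeg h.symm), mul_zero]

end KNaux

namespace KNaux2
open KNaux

variable {r r' : ℕ}

lemma degree_add (p q : Fin r →₀ ℕ) : (p + q).degree = p.degree + q.degree := by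
  simp [Finsupp.degree_eq_weight_one, map_add]

/-- If all low-degree coefficients of `q` vanish, so do low-degree coefficients of
`aeval (L a) q`. -/
lemma coeff_aeval_eq_zero (a : (Fin r → ℤ) →ₗ[ℤ] (Fin r' → ℤ))
    (q : MvPolynomial (Fin r) ℂ) {n : ℕ}
    (hq : ∀ m : Fin r →₀ ℕ, m.degree ≤ n → q.coeff m = 0)
    {d : Fin r' →₀ ℕ} (hd : d.degree ≤ n) :
    MvPolynomial.coeff d (aeval (L a) q) = 0 := by
  rw [show q = ∑ m ∈ q.support, monomial m (q.coeff m) from (q.support_sum_monomial_coeff).symm]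
  rw [map_sum, MvPolynomial.coeff_sum]
  apply Finset.sum_eq_zero
  intro m hm
  rw [aeval_monomial, show (Finsupp.prod m fun k e => L a k ^ e) = Pm a m from
      Finsupp.prod_fintype _ _ (by simp), MvPolynomial.algebraMap_eq,
      MvPolynomial.coeff_C_mul]
  have hdm : m.degree ≠ d.degree := by
    intro h
    exact MvPolynomial.mem_support_iff.1 hm (hq m (h ▸ hd))
  rw [coeff_Pm_eq_zero a (fun h => hdm h.symm), mul_zero]

lemma inducedMap_mul (a : (Fin r → ℤ) →ₗ[ℤ] (Fin r' → ℤ))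
    (A B : MvPowerSeries (Fin r) ℂ) :
    inducedMap a (A * B) = inducedMap a A * inducedMap a B := by
  ext d
  set n := d.degree with hn
  -- difference of truncations has only high-degree monomials
  have hD : ∀ m : Fin r →₀ ℕ, m.degree ≤ n →
      (Trunc (A * B) n - Trunc A n * Trunc B n).coeff m = 0 := by
    intro m hm
    have hmbox : m ∈ box r n := mem_box_of_degree_le hm
    rw [MvPolynomial.coeff_sub, coeff_Trunc, if_pos hmbox, MvPolynomial.coeff_mul]
    rw [MvPowerSeries.coeff_mul]
    rw [sub_eq_zero]
    apply Finset.sum_congr rfl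
    intro p hp
    rw [Finset.HasAntidiagonal.mem_antidiagonal] at hp
    have h1 : p.1 ∈ box r n := mem_box_of_degree_le
      (le_trans (by rw [← hp, degree_add]; exact Nat.le_add_right _ _) hm)
    have h2 : p.2 ∈ box r n := mem_box_of_degree_le
      (le_trans (by rw [← hp, degree_add]; exact Nat.le_add_left _ _) hm)
    rw [coeff_Trunc, coeff_Trunc, if_pos h1, if_pos h2]
  rw [MvPowerSeries.coeff_mul]
  rw [inducedMap_coeff_eq_trunc a (A * B) d (le_refl n)]
  have key : MvPolynomial.coeff d (aeval (L a) (Trunc (A * B) n)) =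
      MvPolynomial.coeff d (aeval (L a) (Trunc A n * Trunc B n)) := by
    have := coeff_aeval_eq_zero a _ hD (le_refl n)
    rw [map_sub, MvPolynomial.coeff_sub, sub_eq_zero] at this
    exact this
  rw [key, map_mul, MvPolynomial.coeff_mul]
  apply Finset.sum_congr rfl
  intro p hp
  rw [Finset.HasAntidiagonal.mem_antidiagonal] at hp
  have h1 : p.1.degree ≤ n := by rw [hn, ← hp, degree_add]; exact Nat.le_add_right _ _
  have h2 : p.2.degree ≤ n := by rw [hn, ← hp, degree_add]; exact Nat.le_add_left _ _
  rw [inducedMap_coeff_eq_trunc a A p.1 h1, inducedMap_coeff_eq_trunc a B p.2 h2]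

lemma inducedMap_coe (a : (Fin r → ℤ) →ₗ[ℤ] (Fin r' → ℤ))
    (p : MvPolynomial (Fin r) ℂ) :
    inducedMap a (p : MvPowerSeries (Fin r) ℂ) =
      ((aeval (L a) p : MvPolynomial (Fin r') ℂ) : MvPowerSeries (Fin r') ℂ) := by
  ext d
  set n := d.degree with hn
  rw [inducedMap_coeff_eq_trunc a _ d (le_refl n)]
  rw [MvPolynomial.coeff_coe]
  have hq : ∀ m : Fin r →₀ ℕ, m.degree ≤ n →
      (Trunc (p : MvPowerSeries (Fin r) ℂ) n - p).coeff m = 0 := by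
    intro m hm
    rw [MvPolynomial.coeff_sub, coeff_Trunc, if_pos (mem_box_of_degree_le hm),
      MvPolynomial.coeff_coe, sub_self]
  have := coeff_aeval_eq_zero a _ hq (le_refl n)
  rw [map_sub, MvPolynomial.coeff_sub, sub_eq_zero] at this
  exact this

end KNaux2

namespace KNaux3
open KNaux KNaux2

variable {r r' r'' : ℕ}

lemma apply_eq_sum (b : (Fin r' → ℤ) →ₗ[ℤ] (Fin r'' → ℤ)) (v : Fin r' → ℤ) (s : Fin r'') :
    b v s = ∑ l : Fin r', v l * b (Pi.single l 1) s := by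
  have hv : v = ∑ l : Fin r', (v l) • Pi.single l (1 : ℤ) := by
    conv_lhs => rw [← Finset.univ_sum_single v]
    exact Finset.sum_congr rfl fun l _ => by rw [← Pi.single_smul, smul_eq_mul, mul_one]
  conv_lhs => rw [hv]
  rw [map_sum, Finset.sum_apply]
  apply Finset.sum_congr rfl
  intro l _
  rw [map_smul, Pi.smul_apply, smul_eq_mul]

lemma aeval_L (b : (Fin r' → ℤ) →ₗ[ℤ] (Fin r'' → ℤ)) (a : (Fin r → ℤ) →ₗ[ℤ] (Fin r' → ℤ))
    (k : Fin r) : aeval (L b) (L a k) = L (b.comp a) k := by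
  have hγ : ∀ s : Fin r'', (((b.comp a) (Pi.single k 1) s : ℤ) : ℂ) =
      ∑ l : Fin r', ((a (Pi.single k 1) l : ℤ) : ℂ) * ((b (Pi.single l 1) s : ℤ) : ℂ) := by
    intro s
    rw [LinearMap.comp_apply, apply_eq_sum b]
    push_cast
    rfl
  simp only [L, map_sum, map_mul, aeval_C, aeval_X, MvPolynomial.algebraMap_eq,
    Finset.mul_sum]
  rw [Finset.sum_comm]
  apply Finset.sum_congr rfl
  intro s _
  rw [hγ s, map_sum, Finset.sum_mul]
  apply Finset.sum_congr rfl
  intro l _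
  rw [map_mul, mul_assoc]


lemma inducedMap_comp (b : (Fin r' → ℤ) →ₗ[ℤ] (Fin r'' → ℤ))
    (a : (Fin r → ℤ) →ₗ[ℤ] (Fin r' → ℤ)) (F : MvPowerSeries (Fin r) ℂ) :
    inducedMap b (inducedMap a F) = inducedMap (b.comp a) F := by
  ext d
  set n := d.degree with hn
  rw [inducedMap_coeff_eq_trunc b _ d (le_refl n)]
  have hq : ∀ m : Fin r' →₀ ℕ, m.degree ≤ n →
      (Trunc (inducedMap a F) n - aeval (L a) (Trunc F n)).coeff m = 0 := by
    intro m hm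
    rw [MvPolynomial.coeff_sub, coeff_Trunc, if_pos (mem_box_of_degree_le hm),
      ← inducedMap_coeff_eq_trunc a F m hm, sub_self]
  have h0 := coeff_aeval_eq_zero b _ hq (le_refl n)
  rw [map_sub, MvPolynomial.coeff_sub, sub_eq_zero] at h0
  rw [h0]
  have hcomp : aeval (L b) (aeval (L a) (Trunc F n)) =
      aeval (fun k => aeval (L b) (L a k)) (Trunc F n) :=
    DFunLike.congr_fun (comp_aeval (f := L a) (aeval (L b))) (Trunc F n)
  rw [hcomp]
  simp only [aeval_L]
  exact (inducedMap_coeff_eq_trunc (b.comp a) F d (le_refl n)).symm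

lemma L_id (k : Fin r) : L (LinearMap.id : (Fin r → ℤ) →ₗ[ℤ] (Fin r → ℤ)) k = X k := by
  rw [L]
  rw [Finset.sum_eq_single k]
  · simp
  · intro l _ hl
    simp [Pi.single_apply, hl.symm]
  · simp

lemma inducedMap_id (F : MvPowerSeries (Fin r) ℂ) :
    inducedMap (LinearMap.id : (Fin r → ℤ) →ₗ[ℤ] (Fin r → ℤ)) F = F := by
  ext d
  rw [inducedMap_coeff_eq_trunc _ F d (le_refl d.degree),
    show L (LinearMap.id : (Fin r → ℤ) →ₗ[ℤ] (Fin r → ℤ)) = X from funext L_id,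
    aeval_X_left_apply, coeff_Trunc, if_pos (mem_box_of_degree_le (le_refl _))]

end KNaux3

namespace KNaux4
open KNaux KNaux2 KNaux3

variable {r r' : ℕ}

lemma coeff_mul_mem (S : Subalgebra ℚ ℂ) {σ : Type} [Fintype σ] [DecidableEq σ] {p q : MvPolynomial σ ℂ}
    (hp : ∀ m, p.coeff m ∈ S) (hq : ∀ m, q.coeff m ∈ S) (m : σ →₀ ℕ) :
    (p * q).coeff m ∈ S := by
  rw [MvPolynomial.coeff_mul]
  exact Subalgebra.sum_mem S fun x _ => mul_mem (hp x.1) (hq x.2)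

lemma coeff_one_mem (S : Subalgebra ℚ ℂ) {σ : Type} [Fintype σ] [DecidableEq σ] (m : σ →₀ ℕ) :
    (1 : MvPolynomial σ ℂ).coeff m ∈ S := by
  rw [MvPolynomial.coeff_one]
  split <;> simp [Subalgebra.one_mem, Subalgebra.zero_mem]

lemma coeff_pow_mem (S : Subalgebra ℚ ℂ) {σ : Type} [Fintype σ] [DecidableEq σ] {p : MvPolynomial σ ℂ}
    (hp : ∀ m, p.coeff m ∈ S) (n : ℕ) (m : σ →₀ ℕ) : (p ^ n).coeff m ∈ S := by
  induction n generalizing m with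
  | zero => simpa using coeff_one_mem S m
  | succ n ih => rw [pow_succ]; exact coeff_mul_mem S (fun m => ih m) hp m

lemma coeff_Pm_mem (S : Subalgebra ℚ ℂ) (a : (Fin r → ℤ) →ₗ[ℤ] (Fin r' → ℤ))
    (hS : ∀ k d, (L a k).coeff d ∈ S) (mm : Fin r →₀ ℕ) (d : Fin r' →₀ ℕ) :
    (Pm a mm).coeff d ∈ S := by
  rw [Pm]
  induction (Finset.univ : Finset (Fin r)) using Finset.cons_induction generalizing d with
  | empty => simpa using coeff_one_mem S d
  | cons k s hks ih =>
      rw [Finset.prod_cons]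
      exact coeff_mul_mem S (coeff_pow_mem S (hS k) (mm k)) (fun m => ih m) d

lemma coeff_L_mem (S : Subalgebra ℚ ℂ) (a : (Fin r → ℤ) →ₗ[ℤ] (Fin r' → ℤ))
    (k : Fin r) (d : Fin r' →₀ ℕ) : (L a k).coeff d ∈ S := by
  rw [L, MvPolynomial.coeff_sum]
  refine Subalgebra.sum_mem S fun l _ => ?_
  rw [MvPolynomial.coeff_C_mul]
  refine mul_mem ?_ ?_
  · exact intCast_mem S _
  · rw [MvPolynomial.coeff_X']
    split <;> simp [Subalgebra.one_mem, Subalgebra.zero_mem]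

lemma coeff_aeval_mem (S : Subalgebra ℚ ℂ) (a : (Fin r → ℤ) →ₗ[ℤ] (Fin r' → ℤ))
    {p : MvPolynomial (Fin r) ℂ} (hp : ∀ m, p.coeff m ∈ S) (d : Fin r' →₀ ℕ) :
    (aeval (L a) p).coeff d ∈ S := by
  rw [show p = ∑ m ∈ p.support, monomial m (p.coeff m) from (p.support_sum_monomial_coeff).symm,
    map_sum, MvPolynomial.coeff_sum]
  refine Subalgebra.sum_mem S fun m _ => ?_
  rw [aeval_monomial, show (Finsupp.prod m fun k e => L a k ^ e) = Pm a m from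
      Finsupp.prod_fintype _ _ (by simp), MvPolynomial.algebraMap_eq,
      MvPolynomial.coeff_C_mul]
  exact mul_mem (hp m) (coeff_Pm_mem S a (coeff_L_mem S a) m d)

lemma aeval_linear_form (a : (Fin r → ℤ) →ₗ[ℤ] (Fin r' → ℤ)) (c : Fin r → ℂ) :
    aeval (L a) (∑ l : Fin r, MvPolynomial.C (c l) * MvPolynomial.X l) =
      ∑ m : Fin r', MvPolynomial.C
        (∑ l : Fin r, c l * ((a (Pi.single l 1) m : ℤ) : ℂ)) * MvPolynomial.X m := by
  simp only [map_sum, map_mul, aeval_C, aeval_X, MvPolynomial.algebraMap_eq, L,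
    Finset.mul_sum]
  rw [Finset.sum_comm]
  apply Finset.sum_congr rfl
  intro m _
  rw [Finset.sum_mul]
  exact Finset.sum_congr rfl fun l _ => (mul_assoc _ _ _).symm

end KNaux4

/-- A power series `h` in variables `t_1, …, t_r` is of class `K_N` (with respect to a
primitive `N`-th root of unity `ζ`) if `h = f / g` where `f, g` are polynomials with
coefficients in `ℚ(ζ)` and `g = ∏_k (1 - λ_k)` with each `λ_k` a `ℤ[ζ]`-linear
combination of the variables. -/
def IsKN (N : ℕ) (ζ : ℂ) {r : ℕ} (h : MvPowerSeries (Fin r) ℂ) : Prop :=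
  ∃ (f : MvPolynomial (Fin r) ℂ) (n : ℕ) (lam : Fin n → Fin r → ℂ),
    (∀ d, f.coeff d ∈ Algebra.adjoin ℚ ({ζ} : Set ℂ)) ∧
    (∀ k l, lam k l ∈ Algebra.adjoin ℤ ({ζ} : Set ℂ)) ∧
    h * ((∏ k, (1 - ∑ l, MvPolynomial.C (lam k l) * MvPolynomial.X l) :
        MvPolynomial (Fin r) ℂ) : MvPowerSeries (Fin r) ℂ)
      = (f : MvPowerSeries (Fin r) ℂ)

open KNaux KNaux2 KNaux3 KNaux4 in
/-- **Class `K_N` descends along split injections.** Let `i : Ξ → Ξ'` be a split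
injection of finitely generated free `ℤ`-modules (`Ξ = ℤ^r`, `Ξ' = ℤ^{r'}`), and let
`F` be an element of the completed symmetric algebra of `Ξ ⊗ ℚ` (a power series with
rational coefficients).  If the image of `F` under the map induced by `i` is of class
`K_N`, then `F` is of class `K_N`. -/
theorem stmt_7 {r r' : ℕ} (N : ℕ) (ζ : ℂ) (hζ : IsPrimitiveRoot ζ N)
    (i : (Fin r → ℤ) →ₗ[ℤ] (Fin r' → ℤ))
    (hsplit : ∃ j : (Fin r' → ℤ) →ₗ[ℤ] (Fin r → ℤ), j.comp i = LinearMap.id)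
    (F : MvPowerSeries (Fin r) ℂ)
    (hrat : ∀ d, MvPowerSeries.coeff d F ∈ Set.range (algebraMap ℚ ℂ))
    (hKN : IsKN N ζ (inducedMap i F)) :
    IsKN N ζ F := by
  obtain ⟨j, hj⟩ := hsplit
  obtain ⟨f', n, lam, hf', hlam, heq⟩ := hKN
  refine ⟨aeval (L j) f', n,
    (fun k m => ∑ l : Fin r', lam k l * ((j (Pi.single l 1) m : ℤ) : ℂ)), ?_, ?_, ?_⟩
  · exact fun d => coeff_aeval_mem _ j hf' d
  · intro k m
    exact Subalgebra.sum_mem _ fun l _ =>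
      mul_mem (hlam k l) (intCast_mem (Algebra.adjoin ℤ ({ζ} : Set ℂ)) _)
  · have h2 := congrArg (inducedMap j) heq
    rw [inducedMap_mul, inducedMap_comp, hj, inducedMap_id, inducedMap_coe,
      inducedMap_coe] at h2
    rw [map_prod] at h2
    have h3 : ∀ k : Fin n,
        aeval (L j) (1 - ∑ l : Fin r', MvPolynomial.C (lam k l) * MvPolynomial.X l) =
          1 - ∑ m : Fin r, MvPolynomial.C
            (∑ l : Fin r', lam k l * ((j (Pi.single l 1) m : ℤ) : ℂ)) * MvPolynomial.X m := by
      intro k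
      rw [map_sub, map_one, aeval_linear_form]
    simp_rw [h3] at h2
    exact h2
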